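/- For every ν ∉ −ℕ and every ρ ∈ ℂ, 𝔉({ρ/(ν+k)}_{k=1}^∞) = Γ(ν+1) ρ^{−ν} J_ν(2ρ), where J_ν is the Bessel function of the first kind. -/

import Mathlib

open scoped BigOperators

/-- Admissible index tuples: k₁ ≥ 1 and k_{i+1} ≥ k_i + 2. -/
def FAdm (m : ℕ) (k : Fin m → ℕ) : Prop :=
  (∀ i, 1 ≤ k i) ∧ ∀ i j : Fin m, (i : ℕ) + 1 = (j : ℕ) → k i + 2 ≤ k j

/-- The function 𝔉 given by the alternating multiple series
`𝔉(x) = 1 + ∑_{m≥1} (-1)^m ∑_{k₁≥1, k_{i+1}≥k_i+2} x_{k₁}x_{k₁+1}⋯x_{k_m}x_{k_m+1}`;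
the sequence is indexed so that `x k` is `x_k` for `k ≥ 1`. -/
noncomputable def Fcal (x : ℕ → ℂ) : ℂ :=
  ∑' p : (Σ m : ℕ, { k : Fin m → ℕ // FAdm m k }),
    (-1 : ℂ) ^ p.1 * ∏ i, x (p.2.1 i) * x (p.2.1 i + 1)

/-- 𝔉 of the finite sequence (x_1, …, x_n): x truncated after position n, padded by zeros. -/
noncomputable def FcalFin (n : ℕ) (x : ℕ → ℂ) : ℂ :=
  Fcal fun k => if k ≤ n then x k else 0

/-- 𝔉 of the finite segment (x_a, …, x_b); it equals 1 when the segment is empty (b = a-1)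
and, by convention, 0 when b = a-2 (a segment of "length -1"). -/
noncomputable def Fseg (x : ℕ → ℂ) (a b : ℕ) : ℂ :=
  if b + 1 < a then 0 else FcalFin (b + 1 - a) (fun j => x (j + a - 1))

lemma FAdm.ge_first {m : ℕ} {k : Fin (m+1) → ℕ} (h : FAdm (m+1) k) (i : Fin m) :
    k 0 + 2 ≤ k i.succ := by
  obtain ⟨i, hi⟩ := i
  induction i with
  | zero => exact h.2 0 ⟨1, by omega⟩ rfl
  | succ n ih =>
      have h1 := ih (by omega)
      have h2 := h.2 ⟨n+1, by omega⟩ ⟨n+2, by omega⟩ rfl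
      have e1 : (⟨n, by omega⟩ : Fin m).succ = (⟨n+1, by omega⟩ : Fin (m+1)) := rfl
      rw [e1] at h1
      have e2 : (⟨n+1, hi⟩ : Fin m).succ = (⟨n+2, by omega⟩ : Fin (m+1)) := rfl
      rw [e2]
      omega

lemma adm_shift {m : ℕ} (p : { k : Fin (m+1) → ℕ // FAdm (m+1) k }) :
    FAdm m (fun i => p.1 i.succ - (p.1 0 + 1)) := by
  constructor
  · intro i
    have := p.2.ge_first i
    simp only
    omega
  · intro i j hij
    simp only
    have h2 := p.2.2 i.succ j.succ (by simpa using hij)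
    have h1 := p.2.ge_first i
    omega

lemma adm_cons {m : ℕ} (q : ℕ × { k : Fin m → ℕ // FAdm m k }) :
    FAdm (m+1) (Fin.cons (q.1 + 1) (fun i => q.2.1 i + (q.1 + 2))) := by
  constructor
  · intro i
    refine Fin.cases ?_ (fun i' => ?_) i
    · rw [Fin.cons_zero]; omega
    · rw [Fin.cons_succ]; omega
  · intro i j hij
    obtain ⟨iv, hiv⟩ := i
    obtain ⟨jv, hjv⟩ := j
    simp only at hij
    have hj : (⟨jv, hjv⟩ : Fin (m+1)) = Fin.succ ⟨iv, by omega⟩ := by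
      apply Fin.ext; simp; omega
    rw [hj, Fin.cons_succ]
    cases iv with
    | zero =>
        have hi : (⟨0, hiv⟩ : Fin (m+1)) = 0 := rfl
        rw [hi, Fin.cons_zero]
        have := q.2.2.1 ⟨0, by omega⟩
        omega
    | succ n =>
        have hi : (⟨n+1, hiv⟩ : Fin (m+1)) = Fin.succ ⟨n, by omega⟩ := rfl
        rw [hi, Fin.cons_succ]
        have := q.2.2.2 ⟨n, by omega⟩ ⟨n+1, by omega⟩ rfl
        omega

def admEquiv (m : ℕ) :
    { k : Fin (m+1) → ℕ // FAdm (m+1) k } ≃ ℕ × { k : Fin m → ℕ // FAdm m k } where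
  toFun p := ⟨p.1 0 - 1, ⟨fun i => p.1 i.succ - (p.1 0 + 1), adm_shift p⟩⟩
  invFun q := ⟨Fin.cons (q.1 + 1) (fun i => q.2.1 i + (q.1 + 2)), adm_cons q⟩
  left_inv p := by
    apply Subtype.ext
    funext i
    refine Fin.cases ?_ (fun i' => ?_) i
    · simp only [Fin.cons_zero]
      have := p.2.1 0
      omega
    · simp only [Fin.cons_succ]
      have h1 := p.2.ge_first i'
      have h2 := p.2.1 0
      omega
  right_inv q := by
    refine Prod.ext ?_ ?_
    · simp only [Fin.cons_zero]
      omega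
    · apply Subtype.ext
      funext i
      simp only [Fin.cons_succ, Fin.cons_zero]
      omega

lemma inv_norm_bound (z : ℂ) (hz : ∀ n : ℕ, z + (n : ℂ) ≠ 0) :
    ∃ C : ℝ, 0 < C ∧ ∀ n : ℕ, ‖z + (n : ℂ)‖⁻¹ ≤ C * ((n : ℝ) + 1)⁻¹ := by
  set N : ℕ := ⌈2 * ‖z‖ + 1⌉₊ with hN
  have hNpos : 0 < N := Nat.ceil_pos.mpr (by positivity)
  have hne : (Finset.range N).Nonempty := ⟨0, Finset.mem_range.mpr hNpos⟩
  set C0 : ℝ := (Finset.range N).sup' hne (fun n => ((n:ℝ)+1) * ‖z + (n:ℂ)‖⁻¹) with hC0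
  refine ⟨max C0 2, lt_of_lt_of_le two_pos (le_max_right _ _), ?_⟩
  intro n
  have hpos : (0:ℝ) < (n:ℝ)+1 := by positivity
  have hnormpos : 0 < ‖z + (n:ℂ)‖ := norm_pos_iff.mpr (hz n)
  have key : ((n:ℝ)+1) * ‖z + (n:ℂ)‖⁻¹ ≤ max C0 2 := by
    rcases lt_or_ge n N with h | h
    · have h5 : ((n:ℝ)+1) * ‖z + (n:ℂ)‖⁻¹ ≤ C0 :=
        Finset.le_sup' (fun n : ℕ => ((n:ℝ)+1) * ‖z + (n:ℂ)‖⁻¹) (Finset.mem_range.mpr h)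
      exact le_trans h5 (le_max_left _ _)
    · have h1 : 2*‖z‖+1 ≤ (N:ℝ) := Nat.le_ceil _
      have h2 : (N:ℝ) ≤ (n:ℝ) := Nat.cast_le.mpr h
      have h3 : ((n:ℝ)+1)/2 ≤ ‖z + (n:ℂ)‖ := by
        have hd : ‖(n:ℂ)‖ - ‖-z‖ ≤ ‖(n:ℂ) - (-z)‖ := norm_sub_norm_le _ _
        rw [sub_neg_eq_add, norm_neg] at hd
        have hn : ‖(n:ℂ)‖ = (n:ℝ) := by simp
        rw [hn] at hd
        have : ‖(n:ℂ) + z‖ = ‖z + (n:ℂ)‖ := by rw [add_comm]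
        rw [this] at hd
        have hz' : 0 ≤ ‖z‖ := norm_nonneg _
        linarith
      have h4 : ‖z + (n:ℂ)‖⁻¹ ≤ (((n:ℝ)+1)/2)⁻¹ := by
        exact inv_anti₀ (by positivity) h3
      calc ((n:ℝ)+1) * ‖z+(n:ℂ)‖⁻¹ ≤ ((n:ℝ)+1) * (((n:ℝ)+1)/2)⁻¹ := by
            exact mul_le_mul_of_nonneg_left h4 (le_of_lt hpos)
        _ = 2 := by field_simp
        _ ≤ max C0 2 := le_max_right _ _
  have h6 := mul_le_mul_of_nonneg_right key (inv_nonneg.mpr hpos.le)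
  rwa [mul_comm ((n:ℝ)+1), mul_assoc, mul_inv_cancel₀ hpos.ne', mul_one] at h6

-- summability of 1/(n+1)^2
lemma summable_inv_sq : Summable (fun k : ℕ => (((k:ℝ)+1)^2)⁻¹) := by
  have h := (Real.summable_one_div_nat_pow (p := 2)).mpr (by norm_num)
  have h2 := (summable_nat_add_iff 1).mpr h
  apply h2.congr
  intro n
  push_cast
  rw [one_div]

open Filter Topology

lemma prod_ne_zero_aux (y : ℂ) (hy : ∀ n : ℕ, y + (n:ℂ) ≠ 0) (k M : ℕ) :
    ∏ j ∈ Finset.range M, (y + (k:ℂ) + (j:ℂ)) ≠ 0 := by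
  apply Finset.prod_ne_zero_iff.mpr
  intro j _
  have h : y + (k:ℂ) + (j:ℂ) = y + ((k+j : ℕ):ℂ) := by push_cast; ring
  rw [h]; exact hy _

lemma norm_inv_prod_le (y : ℂ) (C : ℝ) (hC : 0 < C)
    (hbd : ∀ n : ℕ, ‖y + (n:ℂ)‖⁻¹ ≤ C * ((n:ℝ)+1)⁻¹) (k M : ℕ) :
    ‖(∏ j ∈ Finset.range M, (y + (k:ℂ) + (j:ℂ)))⁻¹‖ ≤ (C * ((k:ℝ)+1)⁻¹)^M := by
  rw [norm_inv, norm_prod, ← Finset.prod_inv_distrib]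
  have : (C * ((k:ℝ)+1)⁻¹)^M = ∏ _j ∈ Finset.range M, (C * ((k:ℝ)+1)⁻¹) := by
    rw [Finset.prod_const, Finset.card_range]
  rw [this]
  apply Finset.prod_le_prod (fun j _ => by positivity)
  intro j _
  have h : y + (k:ℂ) + (j:ℂ) = y + ((k+j : ℕ):ℂ) := by push_cast; ring
  rw [h]
  calc ‖y + ((k+j:ℕ):ℂ)‖⁻¹ ≤ C * (((k+j:ℕ):ℝ)+1)⁻¹ := hbd _
    _ ≤ C * ((k:ℝ)+1)⁻¹ := by
        apply mul_le_mul_of_nonneg_left _ hC.le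
        apply inv_anti₀ (by positivity)
        push_cast; linarith [Nat.cast_nonneg (α := ℝ) j]

lemma telescope (M : ℕ) (hM : 1 ≤ M) (y : ℂ) (hy : ∀ n : ℕ, y + (n:ℂ) ≠ 0) :
    HasSum (fun k : ℕ => (∏ j ∈ Finset.range (M+1), (y + (k:ℂ) + (j:ℂ)))⁻¹)
      ((M : ℂ)⁻¹ * (∏ j ∈ Finset.range M, (y + (j:ℂ)))⁻¹) := by
  obtain ⟨C, hC, hbd⟩ := inv_norm_bound y hy
  set F : ℕ → ℂ := fun k => (∏ j ∈ Finset.range M, (y + (k:ℂ) + (j:ℂ)))⁻¹ with hF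
  have Mne : (M:ℂ) ≠ 0 := Nat.cast_ne_zero.mpr (by omega)
  -- summability
  have hsummable : Summable (fun k : ℕ => (∏ j ∈ Finset.range (M+1), (y + (k:ℂ) + (j:ℂ)))⁻¹) := by
    apply Summable.of_norm
    apply Summable.of_nonneg_of_le (fun k => norm_nonneg _) (fun k => ?_)
      ((summable_inv_sq).mul_left (C^(M+1)))
    calc ‖(∏ j ∈ Finset.range (M+1), (y + (k:ℂ) + (j:ℂ)))⁻¹‖
        ≤ (C * ((k:ℝ)+1)⁻¹)^(M+1) := norm_inv_prod_le y C hC hbd k (M+1)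
      _ = C^(M+1) * (((k:ℝ)+1)⁻¹)^(M+1) := mul_pow _ _ _
      _ ≤ C^(M+1) * (((k:ℝ)+1)⁻¹)^2 := by
          apply mul_le_mul_of_nonneg_left _ (by positivity)
          apply pow_le_pow_of_le_one (by positivity)
            (inv_le_one_of_one_le₀ (by push_cast; linarith [Nat.cast_nonneg (α := ℝ) k]))
            (by omega)
      _ = C^(M+1) * (((k:ℝ)+1)^2)⁻¹ := by rw [inv_pow]
  -- the telescoping identity
  have hid : ∀ k : ℕ, (∏ j ∈ Finset.range (M+1), (y + (k:ℂ) + (j:ℂ)))⁻¹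
      = (M:ℂ)⁻¹ * F k - (M:ℂ)⁻¹ * F (k+1) := by
    intro k
    set D : ℂ := ∏ j ∈ Finset.range (M+1), (y + (k:ℂ) + (j:ℂ)) with hD
    have Dne : D ≠ 0 := prod_ne_zero_aux y hy k (M+1)
    have Ane : (∏ j ∈ Finset.range M, (y + (k:ℂ) + (j:ℂ))) ≠ 0 := prod_ne_zero_aux y hy k M
    have Bne : (∏ j ∈ Finset.range M, (y + ((k+1:ℕ):ℂ) + (j:ℂ))) ≠ 0 :=
      prod_ne_zero_aux y hy (k+1) M
    have hkM : y + (k:ℂ) + (M:ℂ) ≠ 0 := by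
      have h : y + (k:ℂ) + (M:ℂ) = y + ((k+M : ℕ):ℂ) := by push_cast; ring
      rw [h]; exact hy _
    have hk : y + (k:ℂ) ≠ 0 := hy k
    have h1 : D = (∏ j ∈ Finset.range M, (y + (k:ℂ) + (j:ℂ))) * (y + (k:ℂ) + (M:ℂ)) :=
      Finset.prod_range_succ _ _
    have h2 : D = (y + (k:ℂ)) * ∏ j ∈ Finset.range M, (y + ((k+1:ℕ):ℂ) + (j:ℂ)) := by
      rw [hD, Finset.prod_range_succ' (fun j => (y + (k:ℂ) + (j:ℂ)))]
      rw [mul_comm]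
      congr 1
      · push_cast; ring
      · apply Finset.prod_congr rfl; intro j _; push_cast; ring
    have hA : F k = (y + (k:ℂ) + (M:ℂ)) * D⁻¹ := by
      have e : (y + (k:ℂ) + (M:ℂ)) * D⁻¹
          = (y + (k:ℂ) + (M:ℂ)) * ((y + (k:ℂ) + (M:ℂ))⁻¹
              * (∏ j ∈ Finset.range M, (y + (k:ℂ) + (j:ℂ)))⁻¹) := by
        rw [h1, mul_inv, mul_comm ((∏ j ∈ Finset.range M, (y + (k:ℂ) + (j:ℂ)))⁻¹)]
      rw [e, ← mul_assoc, mul_inv_cancel₀ hkM, one_mul]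
    have hB : F (k+1) = (y + (k:ℂ)) * D⁻¹ := by
      have e : (y + (k:ℂ)) * D⁻¹
          = (y + (k:ℂ)) * ((y + (k:ℂ))⁻¹
              * (∏ j ∈ Finset.range M, (y + ((k+1:ℕ):ℂ) + (j:ℂ)))⁻¹) := by
        rw [h2, mul_inv]
      rw [e, ← mul_assoc, mul_inv_cancel₀ hk, one_mul]
    rw [hA, hB]
    field_simp
    ring
  -- conclude
  rw [Summable.hasSum_iff_tendsto_nat hsummable]
  have hps : ∀ n : ℕ, ∑ k ∈ Finset.range n, (∏ j ∈ Finset.range (M+1), (y + (k:ℂ) + (j:ℂ)))⁻¹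
      = (M:ℂ)⁻¹ * F 0 - (M:ℂ)⁻¹ * F n := by
    intro n
    rw [Finset.sum_congr rfl (fun k _ => hid k)]
    exact Finset.sum_range_sub' (fun k => (M:ℂ)⁻¹ * F k) n
  have hFlim : Tendsto (fun n : ℕ => (M:ℂ)⁻¹ * F n) atTop (𝓝 0) := by
    rw [tendsto_zero_iff_norm_tendsto_zero]
    refine squeeze_zero (g := fun n : ℕ => ‖(M:ℂ)⁻¹‖ * (C^M * ((n:ℝ)+1)⁻¹))
      (fun n => norm_nonneg _) ?_ ?_
    · intro n
      rw [norm_mul]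
      apply mul_le_mul_of_nonneg_left _ (norm_nonneg _)
      calc ‖F n‖ ≤ (C * ((n:ℝ)+1)⁻¹)^M := norm_inv_prod_le y C hC hbd n M
        _ = C^M * (((n:ℝ)+1)⁻¹)^M := mul_pow _ _ _
        _ ≤ C^M * (((n:ℝ)+1)⁻¹)^1 := by
            apply mul_le_mul_of_nonneg_left _ (by positivity)
            apply pow_le_pow_of_le_one (by positivity)
              (inv_le_one_of_one_le₀ (by push_cast; linarith [Nat.cast_nonneg (α := ℝ) n])) hM
        _ = C^M * ((n:ℝ)+1)⁻¹ := by rw [pow_one]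
    · have h := tendsto_one_div_add_atTop_nhds_zero_nat.const_mul (‖(M:ℂ)⁻¹‖ * C^M)
      rw [mul_zero] at h
      exact h.congr (fun n => by rw [one_div]; ring)
  have hmain := (tendsto_const_nhds (x := (M:ℂ)⁻¹ * F 0) (f := atTop)).sub hFlim
  rw [sub_zero] at hmain
  have hF0 : F 0 = (∏ j ∈ Finset.range M, (y + (j:ℂ)))⁻¹ := by
    rw [hF]
    simp only
    congr 1
    apply Finset.prod_congr rfl
    intro j _
    push_cast
    ring
  simp only [hps]
  rw [← hF0]
  exact hmain

lemma rest_norm_le (z : ℂ) (C : ℝ) (hC : 0 < C)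
    (hbd : ∀ n : ℕ, ‖(z+1) + (n:ℂ)‖⁻¹ ≤ C * ((n:ℝ)+1)⁻¹) (m t : ℕ)
    (p : { k : Fin m → ℕ // FAdm m k }) :
    ‖∏ i, ((z + (t:ℂ) + 2 + ((p.1 i : ℕ):ℂ)) * (z + (t:ℂ) + 2 + ((p.1 i : ℕ):ℂ) + 1))⁻¹‖
      ≤ (C^2)^m * ∏ i, (((p.1 i : ℝ)) * ((p.1 i : ℝ) + 1))⁻¹ := by
  rw [norm_prod]
  have hrhs : (C^2)^m * ∏ i, (((p.1 i : ℝ)) * ((p.1 i : ℝ) + 1))⁻¹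
      = ∏ i : Fin m, (C^2 * (((p.1 i : ℝ)) * ((p.1 i : ℝ) + 1))⁻¹) := by
    rw [Finset.prod_mul_distrib, Finset.prod_const]
    simp [Finset.card_univ]
  rw [hrhs]
  apply Finset.prod_le_prod (fun i _ => norm_nonneg _)
  intro i _
  have hp1 : 1 ≤ p.1 i := p.2.1 i
  have hppos : (0:ℝ) < (p.1 i : ℝ) := by exact_mod_cast hp1
  have hA : (z + (t:ℂ) + 2 + ((p.1 i : ℕ):ℂ)) = (z+1) + (((t + 1 + p.1 i : ℕ)):ℂ) := by
    push_cast; ring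
  have hB : (z + (t:ℂ) + 2 + ((p.1 i : ℕ):ℂ) + 1) = (z+1) + (((t + 2 + p.1 i : ℕ)):ℂ) := by
    push_cast; ring
  rw [norm_inv, norm_mul, mul_inv, hB, hA]
  have bA : ‖(z+1) + (((t + 1 + p.1 i : ℕ)):ℂ)‖⁻¹ ≤ C * ((p.1 i : ℝ))⁻¹ := by
    calc ‖(z+1) + (((t + 1 + p.1 i : ℕ)):ℂ)‖⁻¹ ≤ C * (((t + 1 + p.1 i : ℕ):ℝ)+1)⁻¹ := hbd _
      _ ≤ C * ((p.1 i : ℝ))⁻¹ := by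
          apply mul_le_mul_of_nonneg_left _ hC.le
          apply inv_anti₀ hppos
          push_cast
          linarith [Nat.cast_nonneg (α := ℝ) t]
  have bB : ‖(z+1) + (((t + 2 + p.1 i : ℕ)):ℂ)‖⁻¹ ≤ C * ((p.1 i : ℝ) + 1)⁻¹ := by
    calc ‖(z+1) + (((t + 2 + p.1 i : ℕ)):ℂ)‖⁻¹ ≤ C * (((t + 2 + p.1 i : ℕ):ℝ)+1)⁻¹ := hbd _
      _ ≤ C * ((p.1 i : ℝ) + 1)⁻¹ := by
          apply mul_le_mul_of_nonneg_left _ hC.le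
          apply inv_anti₀ (by positivity)
          push_cast
          linarith [Nat.cast_nonneg (α := ℝ) t]
  calc ‖(z+1) + (((t + 1 + p.1 i : ℕ)):ℂ)‖⁻¹ * ‖(z+1) + (((t + 2 + p.1 i : ℕ)):ℂ)‖⁻¹
      ≤ (C * ((p.1 i : ℝ))⁻¹) * (C * ((p.1 i : ℝ) + 1)⁻¹) := by
        apply mul_le_mul bA bB (by positivity) (by positivity)
    _ = C^2 * (((p.1 i : ℝ)) * ((p.1 i : ℝ) + 1))⁻¹ := by
        rw [mul_inv]; ring

lemma shift_ne_zero (z : ℂ) (hz : ∀ n : ℕ, z + ((n:ℂ)+1) ≠ 0) : ∀ n : ℕ, (z+1) + (n:ℂ) ≠ 0 := by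
  intro n
  have h := hz n
  intro h2
  apply h
  rw [← h2]
  ring

theorem key (m : ℕ) : ∀ (z : ℂ), (∀ n : ℕ, z + ((n:ℂ)+1) ≠ 0) →
    HasSum (fun p : { k : Fin m → ℕ // FAdm m k } =>
        ∏ i, ((z + (p.1 i : ℂ)) * (z + (p.1 i : ℂ) + 1))⁻¹)
      (((m.factorial : ℂ) * ∏ j ∈ Finset.range m, (z + (j:ℂ) + 1))⁻¹) := by
  induction m with
  | zero =>
      intro z hz
      haveI : Unique {k : Fin 0 → ℕ // FAdm 0 k} :=
        { default := ⟨fun i => i.elim0, ⟨fun i => i.elim0, fun i => i.elim0⟩⟩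
          uniq := fun a => Subtype.ext (funext fun i => i.elim0) }
      have h := hasSum_unique (fun p : {k : Fin 0 → ℕ // FAdm 0 k} =>
        ∏ i, ((z + (p.1 i : ℂ)) * (z + (p.1 i : ℂ) + 1))⁻¹)
      simpa using h
  | succ m ih =>
      intro z hz
      -- real comparison function and its sum, from ih at z = 0
      have h0 : ∀ n : ℕ, (0:ℂ) + ((n:ℂ)+1) ≠ 0 := by
        intro n
        rw [zero_add]
        exact Nat.cast_add_one_ne_zero n
      have hg0 := ih 0 h0
      have hgval : ((m.factorial : ℂ) * ∏ j ∈ Finset.range m, ((0:ℂ) + (j:ℂ) + 1))⁻¹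
          = ((((m.factorial * m.factorial : ℕ) : ℝ))⁻¹ : ℂ) := by
        have : ∏ j ∈ Finset.range m, ((0:ℂ) + (j:ℂ) + 1) = ((m.factorial : ℕ) : ℂ) := by
          rw [← Finset.prod_range_add_one_eq_factorial m]
          push_cast
          apply Finset.prod_congr rfl
          intro j _
          ring
        rw [this]
        push_cast
        ring
      rw [hgval, ← Complex.ofReal_inv] at hg0
      set g : { k : Fin m → ℕ // FAdm m k } → ℝ :=
        fun p => ∏ i, (((p.1 i : ℝ)) * ((p.1 i : ℝ) + 1))⁻¹ with hgdef
      have hgsum : HasSum g ((((m.factorial * m.factorial : ℕ) : ℝ))⁻¹) := by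
        have h2 := Complex.hasSum_re hg0
        rw [Complex.ofReal_re] at h2
        have hre1 : ∀ p : { k : Fin m → ℕ // FAdm m k },
            ((∏ i, (((0:ℂ) + (p.1 i : ℂ)) * ((0:ℂ) + (p.1 i : ℂ) + 1))⁻¹)).re = g p := by
          intro p
          have he : (∏ i, (((0:ℂ) + (p.1 i : ℂ)) * ((0:ℂ) + (p.1 i : ℂ) + 1))⁻¹) = ((g p : ℝ) : ℂ) := by
            rw [hgdef]
            push_cast
            apply Finset.prod_congr rfl
            intro i _
            norm_num
          rw [he, Complex.ofReal_re]
        have h3 : (fun p : { k : Fin m → ℕ // FAdm m k } =>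
            ((∏ i, (((0:ℂ) + (p.1 i : ℂ)) * ((0:ℂ) + (p.1 i : ℂ) + 1))⁻¹)).re) = g := funext hre1
        rwa [h3] at h2
      obtain ⟨C, hC, hbd⟩ := inv_norm_bound (z+1) (shift_ne_zero z hz)
      set Sg : ℝ := (((m.factorial * m.factorial : ℕ) : ℝ))⁻¹ with hSg
      set G : ℕ × { k : Fin m → ℕ // FAdm m k } → ℂ := fun q =>
        ((z + (q.1:ℂ) + 1) * (z + (q.1:ℂ) + 2))⁻¹ *
          ∏ i, ((z + (q.1:ℂ) + 2 + ((q.2.1 i : ℕ):ℂ)) * (z + (q.1:ℂ) + 2 + ((q.2.1 i : ℕ):ℂ) + 1))⁻¹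
        with hGdef
      have hw : ∀ n : ℕ, ∀ j : ℕ, (z + (n:ℂ) + 2) + ((j:ℂ)+1) ≠ 0 := by
        intro n j h
        apply hz (n + j + 2)
        rw [← h]; push_cast; ring
      have hfib : ∀ n : ℕ, HasSum (fun p => G (n, p))
          (((z + (n:ℂ) + 1) * (z + (n:ℂ) + 2))⁻¹ *
            ((m.factorial : ℂ) * ∏ j ∈ Finset.range m, ((z + (n:ℂ) + 2) + (j:ℂ) + 1))⁻¹) := by
        intro n
        simp only [hGdef]
        exact ((ih (z + (n:ℂ) + 2) (hw n)).mul_left (((z + (n:ℂ) + 1) * (z + (n:ℂ) + 2))⁻¹))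
      have hfibnorm : ∀ n : ℕ, Summable (fun p : { k : Fin m → ℕ // FAdm m k } => ‖G (n, p)‖) :=
        fun n => summable_norm_iff.mpr (hfib n).summable
      have hgsummable : Summable g := hgsum.summable
      have hGbound : ∀ n : ℕ, ∀ p, ‖G (n, p)‖ ≤
          (C * ((n:ℝ)+1)⁻¹) * (C * ((n:ℝ)+1)⁻¹) * ((C^2)^m * g p) := by
        intro n p
        have hcn : ‖((z + (n:ℂ) + 1) * (z + (n:ℂ) + 2))⁻¹‖
            ≤ (C * ((n:ℝ)+1)⁻¹) * (C * ((n:ℝ)+1)⁻¹) := by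
          rw [norm_inv, norm_mul, mul_inv]
          have e2 : z + (n:ℂ) + 2 = (z+1) + ((n+1:ℕ):ℂ) := by push_cast; ring
          have e1 : z + (n:ℂ) + 1 = (z+1) + (n:ℂ) := by ring
          rw [e2, e1]
          have b1 := hbd n
          have b2 : ‖(z+1) + ((n+1:ℕ):ℂ)‖⁻¹ ≤ C * ((n:ℝ)+1)⁻¹ := by
            calc ‖(z+1) + ((n+1:ℕ):ℂ)‖⁻¹ ≤ C * (((n+1:ℕ):ℝ)+1)⁻¹ := hbd _
              _ ≤ C * ((n:ℝ)+1)⁻¹ := by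
                  apply mul_le_mul_of_nonneg_left _ hC.le
                  apply inv_anti₀ (by positivity)
                  push_cast; linarith
          exact mul_le_mul b1 b2 (by positivity) (by positivity)
        have hrest := rest_norm_le z C hC hbd m n p
        have hGnp : ‖G (n, p)‖ = ‖((z + (n:ℂ) + 1) * (z + (n:ℂ) + 2))⁻¹‖ *
            ‖∏ i, ((z + (n:ℂ) + 2 + ((p.1 i : ℕ):ℂ)) * (z + (n:ℂ) + 2 + ((p.1 i : ℕ):ℂ) + 1))⁻¹‖ := by
          rw [hGdef]; exact norm_mul _ _
        rw [hGnp]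
        exact mul_le_mul hcn hrest (norm_nonneg _) (by positivity)
      have hSgnn : 0 ≤ Sg := by rw [hSg]; positivity
      have hGnormsummable : Summable (fun q : ℕ × { k : Fin m → ℕ // FAdm m k } => ‖G q‖) := by
        rw [summable_prod_of_nonneg (fun q => norm_nonneg _)]
        refine ⟨hfibnorm, ?_⟩
        apply Summable.of_nonneg_of_le (fun n => tsum_nonneg (fun p => norm_nonneg _))
          (fun n => ?_) ((summable_inv_sq).mul_left (C * C * ((C^2)^m * Sg)))
        have h1 : ∑' p, ‖G (n, p)‖ ≤ ∑' p : { k : Fin m → ℕ // FAdm m k },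
            (C * ((n:ℝ)+1)⁻¹) * (C * ((n:ℝ)+1)⁻¹) * ((C^2)^m * g p) := by
          apply Summable.tsum_le_tsum (fun p => hGbound n p) (hfibnorm n)
          exact ((hgsummable.mul_left ((C^2)^m)).mul_left _)
        have h2 : ∑' p : { k : Fin m → ℕ // FAdm m k },
            (C * ((n:ℝ)+1)⁻¹) * (C * ((n:ℝ)+1)⁻¹) * ((C^2)^m * g p)
            = (C * ((n:ℝ)+1)⁻¹) * (C * ((n:ℝ)+1)⁻¹) * ((C^2)^m * Sg) := by
          rw [tsum_mul_left, tsum_mul_left, hgsum.tsum_eq]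
        have h3 : (C * ((n:ℝ)+1)⁻¹) * (C * ((n:ℝ)+1)⁻¹) * ((C^2)^m * Sg)
            = C * C * ((C^2)^m * Sg) * ((((n:ℝ)+1)^2)⁻¹) := by
          rw [sq ((n:ℝ)+1), mul_inv]; ring
        calc ∑' p, ‖G (n, p)‖ ≤ _ := h1
          _ = _ := h2
          _ = C * C * ((C^2)^m * Sg) * ((((n:ℝ)+1)^2)⁻¹) := h3
      have hGsummable : Summable G := summable_norm_iff.mp hGnormsummable
      have htel0 := (telescope (m+1) (by omega) (z+1) (shift_ne_zero z hz)).mul_left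
        ((m.factorial:ℂ))⁻¹
      have hfunceq : ∀ n : ℕ,
          ((m.factorial:ℂ))⁻¹ * (∏ j ∈ Finset.range (m+1+1), ((z+1) + (n:ℂ) + (j:ℂ)))⁻¹
          = ((z + (n:ℂ) + 1) * (z + (n:ℂ) + 2))⁻¹ *
            ((m.factorial : ℂ) * ∏ j ∈ Finset.range m, ((z + (n:ℂ) + 2) + (j:ℂ) + 1))⁻¹ := by
        intro n
        have hsplit : ∏ j ∈ Finset.range (m+1+1), ((z+1) + (n:ℂ) + (j:ℂ))
            = ((z + (n:ℂ) + 1) * (z + (n:ℂ) + 2)) *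
              ∏ j ∈ Finset.range m, ((z + (n:ℂ) + 2) + (j:ℂ) + 1) := by
          rw [Finset.prod_range_succ' (fun j => (z+1) + (n:ℂ) + (j:ℂ)) (m+1)]
          rw [Finset.prod_range_succ' (fun j => (z+1) + (n:ℂ) + ((j+1:ℕ):ℂ)) m]
          have e2 : ∏ j ∈ Finset.range m, ((z+1) + (n:ℂ) + (((j+1)+1:ℕ):ℂ))
              = ∏ j ∈ Finset.range m, ((z + (n:ℂ) + 2) + (j:ℂ) + 1) :=
            Finset.prod_congr rfl (fun j _ => by push_cast; ring)
          rw [e2]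
          push_cast
          ring
        rw [hsplit]
        simp only [mul_inv]
        ring
      have hvaleq : ((m.factorial:ℂ))⁻¹ *
            ((((m+1:ℕ)):ℂ)⁻¹ * (∏ j ∈ Finset.range (m+1), ((z+1) + (j:ℂ)))⁻¹)
          = (((m+1).factorial : ℂ) * ∏ j ∈ Finset.range (m+1), (z + (j:ℂ) + 1))⁻¹ := by
        have e : ∏ j ∈ Finset.range (m+1), ((z+1) + (j:ℂ))
            = ∏ j ∈ Finset.range (m+1), (z + (j:ℂ) + 1) :=
          Finset.prod_congr rfl (fun j _ => by ring)
        rw [e, Nat.factorial_succ]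
        push_cast
        simp only [mul_inv]
        ring
      have htel : HasSum (fun n : ℕ => ((z + (n:ℂ) + 1) * (z + (n:ℂ) + 2))⁻¹ *
            ((m.factorial : ℂ) * ∏ j ∈ Finset.range m, ((z + (n:ℂ) + 2) + (j:ℂ) + 1))⁻¹)
          ((((m+1).factorial : ℂ) * ∏ j ∈ Finset.range (m+1), (z + (j:ℂ) + 1))⁻¹) := by
        have h := htel0
        rw [funext hfunceq, hvaleq] at h
        exact h
      have hGS := hGsummable.hasSum
      have hfibsum := hGS.prod_fiberwise hfib
      have hval := hfibsum.unique htel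
      rw [hval] at hGS
      have hcomp : ∀ q : ℕ × { k : Fin m → ℕ // FAdm m k },
          (fun p : { k : Fin (m+1) → ℕ // FAdm (m+1) k } =>
            ∏ i, ((z + (p.1 i : ℂ)) * (z + (p.1 i : ℂ) + 1))⁻¹) ((admEquiv m).symm q) = G q := by
        intro q
        obtain ⟨n, p⟩ := q
        have hv : (((admEquiv m).symm (n, p)).1 : Fin (m+1) → ℕ)
            = Fin.cons (n + 1) (fun i => p.1 i + (n + 2)) := rfl
        show ∏ i, ((z + ((((admEquiv m).symm (n, p)).1 : Fin (m+1) → ℕ) i : ℂ)) *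
            (z + ((((admEquiv m).symm (n, p)).1 : Fin (m+1) → ℕ) i : ℂ) + 1))⁻¹ = G (n, p)
        rw [hv, Fin.prod_univ_succ]
        simp only [Fin.cons_zero, Fin.cons_succ, hGdef]
        congr 1
        · congr 1
          push_cast
          ring
        · apply Finset.prod_congr rfl
          intro i _
          congr 1
          push_cast
          ring
      have hfinal : HasSum ((fun p : { k : Fin (m+1) → ℕ // FAdm (m+1) k } =>
            ∏ i, ((z + (p.1 i : ℂ)) * (z + (p.1 i : ℂ) + 1))⁻¹) ∘ ⇑(admEquiv m).symm)
          ((((m+1).factorial : ℂ) * ∏ j ∈ Finset.range (m+1), (z + (j:ℂ) + 1))⁻¹) := by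
        rw [show ((fun p : { k : Fin (m+1) → ℕ // FAdm (m+1) k } =>
            ∏ i, ((z + (p.1 i : ℂ)) * (z + (p.1 i : ℂ) + 1))⁻¹) ∘ ⇑(admEquiv m).symm) = G
          from funext hcomp]
        exact hGS
      exact ((admEquiv m).symm.hasSum_iff).mp hfinal

lemma g_hasSum (m : ℕ) :
    HasSum (fun p : { k : Fin m → ℕ // FAdm m k } =>
      ∏ i, (((p.1 i : ℝ)) * ((p.1 i : ℝ) + 1))⁻¹) ((((m.factorial * m.factorial : ℕ) : ℝ))⁻¹) := by
  have h0 : ∀ n : ℕ, (0:ℂ) + ((n:ℂ)+1) ≠ 0 := by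
    intro n
    rw [zero_add]
    exact Nat.cast_add_one_ne_zero n
  have hg0 := key m 0 h0
  have hgval : ((m.factorial : ℂ) * ∏ j ∈ Finset.range m, ((0:ℂ) + (j:ℂ) + 1))⁻¹
      = ((((m.factorial * m.factorial : ℕ) : ℝ))⁻¹ : ℂ) := by
    have : ∏ j ∈ Finset.range m, ((0:ℂ) + (j:ℂ) + 1) = ((m.factorial : ℕ) : ℂ) := by
      rw [← Finset.prod_range_add_one_eq_factorial m]
      push_cast
      apply Finset.prod_congr rfl
      intro j _
      ring
    rw [this]
    push_cast
    ring
  rw [hgval, ← Complex.ofReal_inv] at hg0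
  have h2 := Complex.hasSum_re hg0
  rw [Complex.ofReal_re] at h2
  have hre1 : ∀ p : { k : Fin m → ℕ // FAdm m k },
      ((∏ i, (((0:ℂ) + (p.1 i : ℂ)) * ((0:ℂ) + (p.1 i : ℂ) + 1))⁻¹)).re
        = ∏ i, (((p.1 i : ℝ)) * ((p.1 i : ℝ) + 1))⁻¹ := by
    intro p
    have he : (∏ i, (((0:ℂ) + (p.1 i : ℂ)) * ((0:ℂ) + (p.1 i : ℂ) + 1))⁻¹)
        = ((((∏ i, (((p.1 i : ℝ)) * ((p.1 i : ℝ) + 1))⁻¹) : ℝ)) : ℂ) := by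
      push_cast
      apply Finset.prod_congr rfl
      intro i _
      norm_num
    rw [he, Complex.ofReal_re]
  have h3 : (fun p : { k : Fin m → ℕ // FAdm m k } =>
      ((∏ i, (((0:ℂ) + (p.1 i : ℂ)) * ((0:ℂ) + (p.1 i : ℂ) + 1))⁻¹)).re)
      = fun p => ∏ i, (((p.1 i : ℝ)) * ((p.1 i : ℝ) + 1))⁻¹ := funext hre1
  rwa [h3] at h2

lemma base_norm_le (ν : ℂ) (C : ℝ) (hC : 0 < C)
    (hbd : ∀ n : ℕ, ‖(ν+1) + (n:ℂ)‖⁻¹ ≤ C * ((n:ℝ)+1)⁻¹) (m : ℕ)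
    (p : { k : Fin m → ℕ // FAdm m k }) :
    ‖∏ i, ((ν + ((p.1 i : ℕ):ℂ)) * (ν + ((p.1 i : ℕ):ℂ) + 1))⁻¹‖
      ≤ (C^2)^m * ∏ i, (((p.1 i : ℝ)) * ((p.1 i : ℝ) + 1))⁻¹ := by
  rw [norm_prod]
  have hrhs : (C^2)^m * ∏ i, (((p.1 i : ℝ)) * ((p.1 i : ℝ) + 1))⁻¹
      = ∏ i : Fin m, (C^2 * (((p.1 i : ℝ)) * ((p.1 i : ℝ) + 1))⁻¹) := by
    rw [Finset.prod_mul_distrib, Finset.prod_const]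
    simp [Finset.card_univ]
  rw [hrhs]
  apply Finset.prod_le_prod (fun i _ => norm_nonneg _)
  intro i _
  have hp1 : 1 ≤ p.1 i := p.2.1 i
  have hppos : (0:ℝ) < (p.1 i : ℝ) := by exact_mod_cast hp1
  have hB : (ν + ((p.1 i : ℕ):ℂ) + 1) = (ν+1) + ((p.1 i : ℕ):ℂ) := by ring
  have hA : (ν + ((p.1 i : ℕ):ℂ)) = (ν+1) + (((p.1 i - 1 : ℕ)):ℂ) := by
    have : ((p.1 i : ℕ):ℂ) = (((p.1 i - 1 : ℕ)):ℂ) + 1 := by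
      have : (p.1 i - 1) + 1 = p.1 i := by omega
      rw [← this]
      push_cast
      ring
    rw [this]
    ring
  rw [norm_inv, norm_mul, mul_inv, hB, hA]
  have bA : ‖(ν+1) + (((p.1 i - 1 : ℕ)):ℂ)‖⁻¹ ≤ C * ((p.1 i : ℝ))⁻¹ := by
    calc ‖(ν+1) + (((p.1 i - 1 : ℕ)):ℂ)‖⁻¹ ≤ C * (((p.1 i - 1 : ℕ):ℝ)+1)⁻¹ := hbd _
      _ = C * ((p.1 i : ℝ))⁻¹ := by
          congr 2
          have : (p.1 i - 1) + 1 = p.1 i := by omega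
          rw [← this]
          push_cast
          ring
  have bB : ‖(ν+1) + ((p.1 i : ℕ):ℂ)‖⁻¹ ≤ C * ((p.1 i : ℝ) + 1)⁻¹ := hbd _
  calc ‖(ν+1) + (((p.1 i - 1 : ℕ)):ℂ)‖⁻¹ * ‖(ν+1) + ((p.1 i : ℕ):ℂ)‖⁻¹
      ≤ (C * ((p.1 i : ℝ))⁻¹) * (C * ((p.1 i : ℝ) + 1)⁻¹) := by
        apply mul_le_mul bA bB (by positivity) (by positivity)
    _ = C^2 * (((p.1 i : ℝ)) * ((p.1 i : ℝ) + 1))⁻¹ := by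
        rw [mul_inv]; ring

lemma Gamma_prod (ν : ℂ) (hν : ∀ m : ℕ, ν + ((m : ℂ) + 1) ≠ 0) (m : ℕ) :
    Complex.Gamma (ν + (m:ℂ) + 1)
      = (∏ j ∈ Finset.range m, (ν + (j:ℂ) + 1)) * Complex.Gamma (ν + 1) := by
  induction m with
  | zero => simp
  | succ m ih =>
      have hne : ν + (m:ℂ) + 1 ≠ 0 := by
        have h := hν m
        intro h2
        apply h
        rw [← h2]
        ring
      have e : ν + ((m+1:ℕ):ℂ) + 1 = (ν + (m:ℂ) + 1) + 1 := by push_cast; ring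
      rw [e, Complex.Gamma_add_one _ hne, ih, Finset.prod_range_succ]
      ring

/-- 𝔉({ρ/(ν+k)}_{k=1}^∞) = Γ(ν+1) ρ^{-ν} J_ν(2ρ), the right-hand side written as the
entire function of ρ: ∑_{m≥0} (-1)^m Γ(ν+1) ρ^{2m}/(m! Γ(ν+m+1)). -/
theorem stmt_10 (ν : ℂ) (hν : ∀ m : ℕ, ν + ((m : ℂ) + 1) ≠ 0) (ρ : ℂ) :
    Fcal (fun k => ρ / (ν + (k : ℂ))) =
      ∑' m : ℕ, (-1 : ℂ) ^ m * Complex.Gamma (ν + 1) * ρ ^ (2 * m) /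
        ((Nat.factorial m : ℂ) * Complex.Gamma (ν + (m : ℂ) + 1)) := by
  obtain ⟨C, hC, hbd⟩ := inv_norm_bound (ν+1) (shift_ne_zero ν hν)
  set H : (Σ m : ℕ, { k : Fin m → ℕ // FAdm m k }) → ℂ := fun p =>
    (-1:ℂ)^p.1 * (ρ^(2*p.1) * ∏ i, ((ν + ((p.2.1 i : ℕ):ℂ)) * (ν + ((p.2.1 i : ℕ):ℂ) + 1))⁻¹)
    with hHdef
  have hfibsummable : ∀ m : ℕ, Summable (fun p : { k : Fin m → ℕ // FAdm m k } => H ⟨m, p⟩) := by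
    intro m
    simp only [hHdef]
    exact ((key m ν hν).summable.mul_left ((-1:ℂ)^m * ρ^(2*m))).congr (fun p => by ring)
  have hHnorm : ∀ (m : ℕ) (p : { k : Fin m → ℕ // FAdm m k }),
      ‖H ⟨m, p⟩‖ = ‖ρ‖^(2*m) *
        ‖∏ i, ((ν + ((p.1 i : ℕ):ℂ)) * (ν + ((p.1 i : ℕ):ℂ) + 1))⁻¹‖ := by
    intro m p
    simp only [hHdef]
    rw [norm_mul, norm_mul, norm_pow, norm_pow, norm_neg, norm_one, one_pow, one_mul]
  have hHsummable : Summable H := by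
    apply summable_norm_iff.mp
    rw [summable_sigma_of_nonneg (fun p => norm_nonneg _)]
    constructor
    · intro m
      exact summable_norm_iff.mpr (hfibsummable m)
    · apply Summable.of_nonneg_of_le (fun m => tsum_nonneg (fun p => norm_nonneg _)) (fun m => ?_)
        (Real.summable_pow_div_factorial ((‖ρ‖*C)^2))
      have hgs := g_hasSum m
      have h1 : ∑' p : { k : Fin m → ℕ // FAdm m k }, ‖H ⟨m, p⟩‖
          ≤ ∑' p : { k : Fin m → ℕ // FAdm m k },
            ‖ρ‖^(2*m) * ((C^2)^m * ∏ i, (((p.1 i : ℝ)) * ((p.1 i : ℝ) + 1))⁻¹) := by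
        apply Summable.tsum_le_tsum ?_ (summable_norm_iff.mpr (hfibsummable m))
          ((hgs.summable.mul_left ((C^2)^m)).mul_left (‖ρ‖^(2*m)))
        intro p
        rw [hHnorm m p]
        exact mul_le_mul_of_nonneg_left (base_norm_le ν C hC hbd m p) (by positivity)
      have h2 : ∑' p : { k : Fin m → ℕ // FAdm m k },
          ‖ρ‖^(2*m) * ((C^2)^m * ∏ i, (((p.1 i : ℝ)) * ((p.1 i : ℝ) + 1))⁻¹)
          = ‖ρ‖^(2*m) * ((C^2)^m * (((m.factorial * m.factorial : ℕ):ℝ))⁻¹) := by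
        rw [tsum_mul_left, tsum_mul_left, hgs.tsum_eq]
      have hf1 : (1:ℝ) ≤ (m.factorial:ℝ) := by exact_mod_cast m.factorial_pos
      have h3 : ‖ρ‖^(2*m) * ((C^2)^m * (((m.factorial * m.factorial : ℕ):ℝ))⁻¹)
          ≤ ((‖ρ‖*C)^2)^m / m.factorial := by
        rw [div_eq_mul_inv]
        have e : ((‖ρ‖*C)^2)^m = ‖ρ‖^(2*m) * (C^2)^m := by
          rw [mul_pow, mul_pow, ← pow_mul]
        rw [e, mul_assoc]
        apply mul_le_mul_of_nonneg_left _ (by positivity)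
        apply mul_le_mul_of_nonneg_left _ (by positivity)
        apply inv_anti₀ (by linarith)
        push_cast
        nlinarith
      calc ∑' p : { k : Fin m → ℕ // FAdm m k }, ‖H ⟨m, p⟩‖ ≤ _ := h1
        _ = _ := h2
        _ ≤ ((‖ρ‖*C)^2)^m / m.factorial := h3
  have hterm : ∀ p : (Σ m : ℕ, { k : Fin m → ℕ // FAdm m k }),
      (-1:ℂ)^p.1 * ∏ i, (ρ / (ν + ((p.2.1 i : ℕ):ℂ))) * (ρ / (ν + (((p.2.1 i + 1 : ℕ)):ℂ)))
      = H p := by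
    intro p
    obtain ⟨m, p⟩ := p
    simp only [hHdef]
    congr 1
    have hfac : ∀ i : Fin m, (ρ / (ν + ((p.1 i : ℕ):ℂ))) * (ρ / (ν + (((p.1 i + 1 : ℕ)):ℂ)))
        = ρ^2 * ((ν + ((p.1 i : ℕ):ℂ)) * (ν + ((p.1 i : ℕ):ℂ) + 1))⁻¹ := by
      intro i
      have e : (ν + (((p.1 i + 1 : ℕ)):ℂ)) = ν + ((p.1 i:ℕ):ℂ) + 1 := by push_cast; ring
      rw [div_mul_div_comm, e, ← sq, div_eq_mul_inv]
    rw [Finset.prod_congr rfl (fun i _ => hfac i), Finset.prod_mul_distrib,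
      Finset.prod_const, Finset.card_univ, Fintype.card_fin, ← pow_mul]
  have h4 : Fcal (fun k => ρ / (ν + (k:ℂ))) = ∑' p, H p := tsum_congr hterm
  rw [h4, hHsummable.tsum_sigma]
  apply tsum_congr
  intro m
  have hkey := (key m ν hν).mul_left ((-1:ℂ)^m * ρ^(2*m))
  have h5 : ∑' p : { k : Fin m → ℕ // FAdm m k }, H ⟨m, p⟩
      = ((-1:ℂ)^m * ρ^(2*m)) *
        ((m.factorial : ℂ) * ∏ j ∈ Finset.range m, (ν + (j:ℂ) + 1))⁻¹ := by
    rw [show (fun p : { k : Fin m → ℕ // FAdm m k } => H ⟨m, p⟩)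
        = fun p => ((-1:ℂ)^m * ρ^(2*m)) *
            ∏ i, ((ν + ((p.1 i:ℕ):ℂ)) * (ν + ((p.1 i:ℕ):ℂ) + 1))⁻¹
      from funext fun p => by simp only [hHdef]; ring]
    exact hkey.tsum_eq
  rw [h5]
  have hΓ := Gamma_prod ν hν m
  have hΓne : Complex.Gamma (ν + 1) ≠ 0 := by
    apply Complex.Gamma_ne_zero
    intro n h
    apply hν n
    have e : ν + ((n:ℂ)+1) = (ν+1) + (n:ℂ) := by ring
    rw [e, h]
    ring
  have hPne : (∏ j ∈ Finset.range m, (ν + (j:ℂ) + 1)) ≠ 0 := by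
    apply Finset.prod_ne_zero_iff.mpr
    intro j _
    have h := hν j
    intro h2
    exact h (by rw [← h2]; ring)
  have hfacne : ((m.factorial : ℕ):ℂ) ≠ 0 := Nat.cast_ne_zero.mpr m.factorial_pos.ne'
  rw [hΓ]
  field_simp
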